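/- The Zero-Sum Cut Defense decision problem is NP-hard: there is a polynomial-time reduction from Knapsack such that a set of items with total value ≥ U and total weight ≤ H exists if and only if in the constructed chain-of-triangles instance the defender can publish weights achieving attack probability zero (forcing the minimum attack cost to be at least U when the attacker's budget is U−1) with total defender cost increase at most H over the unperturbed cost. -/

import Mathlib

open SimpleGraph

/-- Length of a walk with respect to edge weights `w`. -/
noncomputable def walkLen {V : Type*} {G : SimpleGraph V} (w : Sym2 V → ℝ) {s t : V}
    (p : G.Walk s t) : ℝ := (p.edges.map w).sum

/-- Vertices of the chain-of-triangles gadget: `Sum.inl i` is `u_i`, `Sum.inr i` is `ω_{i+1}`. -/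
abbrev CV (n : ℕ) := Fin (n + 1) ⊕ Fin n

/-- The bottom edge `{u_{i-1}, u_i}` of the `i`-th triangle (on the target path). -/
def botE (n : ℕ) (i : Fin n) : Sym2 (CV n) := s(Sum.inl i.castSucc, Sum.inl i.succ)

/-- The detour edge `{u_{i-1}, ω_i}` of the `i`-th triangle. -/
def d1E (n : ℕ) (i : Fin n) : Sym2 (CV n) := s(Sum.inl i.castSucc, Sum.inr i)

/-- The detour edge `{ω_i, u_i}` of the `i`-th triangle. -/
def d2E (n : ℕ) (i : Fin n) : Sym2 (CV n) := s(Sum.inr i, Sum.inl i.succ)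

/-- The chain-of-triangles gadget graph. -/
def chainGraph (n : ℕ) : SimpleGraph (CV n) :=
  SimpleGraph.fromEdgeSet {e | ∃ i : Fin n, e = botE n i ∨ e = d1E n i ∨ e = d2E n i}

/-- Source `s = u_0`. -/
def src (n : ℕ) : CV n := Sum.inl 0

/-- Destination `t = u_n`. -/
def dst (n : ℕ) : CV n := Sum.inl (Fin.last n)

/-- An attack on the chain gadget: removable edges lie in the graph, no bottom edge
(edge of `p*`) is removed, and afterwards every simple `s`–`t` path other than the bottom
path `p*` (i.e. any path visiting some detour vertex `ω_i`) is strictly longer than `p*`. -/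
def IsChainAttack (n : ℕ) (w' : Sym2 (CV n) → ℝ) (E' : Finset (Sym2 (CV n))) : Prop :=
  ↑E' ⊆ (chainGraph n).edgeSet ∧ (∀ i : Fin n, botE n i ∉ E') ∧
    ∀ q : ((chainGraph n).deleteEdges ↑E').Walk (src n) (dst n), q.IsPath →
      (∃ i : Fin n, Sum.inr i ∈ q.support) →
      ∑ i : Fin n, w' (botE n i) < walkLen w' q


section Helpers
variable {n : ℕ}

@[simp] lemma botE_eq_botE {i j : Fin n} : botE n i = botE n j ↔ i = j := by
  simp [botE, Sym2.eq_iff, Fin.ext_iff]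
  omega

@[simp] lemma d1E_eq_d1E {i j : Fin n} : d1E n i = d1E n j ↔ i = j := by
  constructor
  · rintro h; simp [d1E, Sym2.eq_iff, Fin.ext_iff] at h; omega
  · rintro rfl; rfl

@[simp] lemma d2E_eq_d2E {i j : Fin n} : d2E n i = d2E n j ↔ i = j := by
  constructor
  · rintro h; simp [d2E, Sym2.eq_iff, Fin.ext_iff] at h; omega
  · rintro rfl; rfl

@[simp] lemma botE_ne_d1E {i j : Fin n} : botE n i ≠ d1E n j := by
  simp [botE, d1E, Sym2.eq_iff]

@[simp] lemma botE_ne_d2E {i j : Fin n} : botE n i ≠ d2E n j := by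
  simp [botE, d2E, Sym2.eq_iff]

@[simp] lemma d1E_ne_d2E {i j : Fin n} : d1E n i ≠ d2E n j := by
  rintro h; simp [d1E, d2E, Sym2.eq_iff, Fin.ext_iff] at h; omega

lemma mem_edgeSet_chain {e : Sym2 (CV n)} (h : e ∈ (chainGraph n).edgeSet) :
    ∃ i, e = botE n i ∨ e = d1E n i ∨ e = d2E n i := by
  rw [chainGraph, edgeSet_fromEdgeSet] at h
  exact h.1

lemma adj_bot (i : Fin n) : (chainGraph n).Adj (Sum.inl i.castSucc) (Sum.inl i.succ) := by
  rw [chainGraph, fromEdgeSet_adj]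
  refine ⟨⟨i, Or.inl rfl⟩, by simp [Fin.ext_iff]; try omega⟩

lemma adj_d1 (i : Fin n) : (chainGraph n).Adj (Sum.inl i.castSucc) (Sum.inr i) := by
  rw [chainGraph, fromEdgeSet_adj]
  exact ⟨⟨i, Or.inr (Or.inl rfl)⟩, by simp⟩

lemma adj_d2 (i : Fin n) : (chainGraph n).Adj (Sum.inr i) (Sum.inl i.succ) := by
  rw [chainGraph, fromEdgeSet_adj]
  exact ⟨⟨i, Or.inr (Or.inr rfl)⟩, by simp⟩

lemma adj_inl {k : Fin (n+1)} {x : CV n} (h : (chainGraph n).Adj (Sum.inl k) x) :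
    ∃ i : Fin n, (k = i.castSucc ∧ x = Sum.inl i.succ) ∨ (k = i.succ ∧ x = Sum.inl i.castSucc)
      ∨ (k = i.castSucc ∧ x = Sum.inr i) ∨ (k = i.succ ∧ x = Sum.inr i) := by
  rw [chainGraph, fromEdgeSet_adj] at h
  obtain ⟨⟨i, hi⟩, -⟩ := h
  refine ⟨i, ?_⟩
  rcases hi with h | h | h <;>
    · simp only [botE, d1E, d2E, Sym2.eq_iff] at h
      rcases h with ⟨h1, h2⟩ | ⟨h1, h2⟩ <;> simp_all

lemma adj_inr {i : Fin n} {x : CV n} (h : (chainGraph n).Adj (Sum.inr i) x) :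
    x = Sum.inl i.castSucc ∨ x = Sum.inl i.succ := by
  rw [chainGraph, fromEdgeSet_adj] at h
  obtain ⟨⟨j, hj⟩, -⟩ := h
  rcases hj with h | h | h <;>
    · simp only [botE, d1E, d2E, Sym2.eq_iff] at h
      rcases h with ⟨h1, h2⟩ | ⟨h1, h2⟩ <;> simp_all

@[simp] lemma walkLen_nil {V : Type*} {G : SimpleGraph V} (w : Sym2 V → ℝ) {u : V} :
    walkLen w (SimpleGraph.Walk.nil' (G := G) u) = 0 := by simp [walkLen]

@[simp] lemma walkLen_cons {V : Type*} {G : SimpleGraph V} (w : Sym2 V → ℝ) {u v t : V}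
    (h : G.Adj u v) (p : G.Walk v t) :
    walkLen w (SimpleGraph.Walk.cons h p) = w s(u, v) + walkLen w p := by simp [walkLen]

@[simp] lemma walkLen_copy {V : Type*} {G : SimpleGraph V} (w : Sym2 V → ℝ) {u v u' v' : V}
    (p : G.Walk u v) (h1 : u = u') (h2 : v = v') :
    walkLen w (p.copy h1 h2) = walkLen w p := by subst h1; subst h2; rfl

lemma filter_ge_step {k : ℕ} (hk : k < n) :
    (Finset.univ.filter fun i : Fin n => k ≤ i.val)
      = insert ⟨k, hk⟩ (Finset.univ.filter fun i : Fin n => k + 1 ≤ i.val) := by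
  ext i; simp [Fin.ext_iff]; omega

lemma filter_ge_last : (Finset.univ.filter fun i : Fin n => n ≤ i.val) = ∅ := by
  ext i; simp

end Helpers
section WalkT

open SimpleGraph.Walk
open SimpleGraph

def walkT (n : ℕ) (T : Finset (Fin n)) (k : ℕ) (hk : k ≤ n) :
    (chainGraph n).Walk (Sum.inl ⟨k, Nat.lt_succ_of_le hk⟩) (dst n) :=
  if h : k = n then
    (Walk.nil' (dst n)).copy (by subst h; rfl) rfl
  else
    if ⟨k, lt_of_le_of_ne hk h⟩ ∈ T then
      Walk.cons (adj_d1 ⟨k, lt_of_le_of_ne hk h⟩)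
        (Walk.cons (adj_d2 ⟨k, lt_of_le_of_ne hk h⟩) (walkT n T (k+1) (lt_of_le_of_ne hk h)))
    else
      Walk.cons (adj_bot ⟨k, lt_of_le_of_ne hk h⟩) (walkT n T (k+1) (lt_of_le_of_ne hk h))
termination_by n - k

lemma walkT_support (n : ℕ) (T : Finset (Fin n)) (k : ℕ) (hk : k ≤ n) (x : CV n) :
    x ∈ (walkT n T k hk).support ↔
      (∃ j : Fin (n+1), k ≤ j.val ∧ x = Sum.inl j) ∨
        (∃ i : Fin n, i ∈ T ∧ k ≤ i.val ∧ x = Sum.inr i) := by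
  rw [walkT]
  split_ifs with h h2
  · subst h
    rw [support_copy]
    simp only [support_copy, support_nil, List.mem_singleton, dst]
    constructor
    · rintro rfl
      refine Or.inl ⟨Fin.last _, ?_, rfl⟩
      simp
    · rintro (⟨j, hj, rfl⟩ | ⟨i, hi, hn, rfl⟩)
      · have hj' : j = Fin.last _ := Fin.ext (by simp; omega)
        rw [hj']
      · exact absurd hn (Nat.not_le.mpr i.isLt)
  · have hk' : k < n := lt_of_le_of_ne hk h
    rw [support_cons, support_cons]
    simp only [List.mem_cons, walkT_support n T (k+1) hk']
    constructor
    · rintro (rfl | rfl | ⟨j, hj, rfl⟩ | ⟨i, hi, hn, rfl⟩)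
      · exact Or.inl ⟨_, le_refl _, rfl⟩
      · exact Or.inr ⟨_, h2, le_refl _, rfl⟩
      · exact Or.inl ⟨j, by omega, rfl⟩
      · exact Or.inr ⟨i, hi, by omega, rfl⟩
    · rintro (⟨j, hj, rfl⟩ | ⟨i, hi, hn, rfl⟩)
      · rcases eq_or_lt_of_le hj with he | hl
        · exact Or.inl (by congr 1; exact Fin.ext he.symm)
        · exact Or.inr (Or.inr (Or.inl ⟨j, by omega, rfl⟩))
      · rcases eq_or_lt_of_le hn with he | hl
        · refine Or.inr (Or.inl ?_)
          congr 1
          exact Fin.ext he.symm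
        · exact Or.inr (Or.inr (Or.inr ⟨i, hi, by omega, rfl⟩))
  · have hk' : k < n := lt_of_le_of_ne hk h
    rw [support_cons]
    simp only [List.mem_cons, walkT_support n T (k+1) hk']
    constructor
    · rintro (rfl | ⟨j, hj, rfl⟩ | ⟨i, hi, hn, rfl⟩)
      · exact Or.inl ⟨_, le_refl _, rfl⟩
      · exact Or.inl ⟨j, by omega, rfl⟩
      · exact Or.inr ⟨i, hi, by omega, rfl⟩
    · rintro (⟨j, hj, rfl⟩ | ⟨i, hi, hn, rfl⟩)
      · rcases eq_or_lt_of_le hj with he | hl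
        · exact Or.inl (by congr 1; exact Fin.ext he.symm)
        · exact Or.inr (Or.inl ⟨j, by omega, rfl⟩)
      · rcases eq_or_lt_of_le hn with he | hl
        · exact absurd (show i = ⟨k, hk'⟩ from Fin.ext he.symm) (by rintro rfl; exact h2 hi)
        · exact Or.inr (Or.inr ⟨i, hi, by omega, rfl⟩)
termination_by n - k

lemma walkT_edges (n : ℕ) (T : Finset (Fin n)) (k : ℕ) (hk : k ≤ n) (e : Sym2 (CV n)) :
    e ∈ (walkT n T k hk).edges ↔
      ∃ i : Fin n, k ≤ i.val ∧
        ((i ∉ T ∧ e = botE n i) ∨ (i ∈ T ∧ (e = d1E n i ∨ e = d2E n i))) := by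
  rw [walkT]
  split_ifs with h h2
  · subst h
    simp only [edges_copy, edges_nil, List.not_mem_nil, false_iff]
    rintro ⟨i, hi, -⟩
    exact absurd hi (Nat.not_le.mpr i.isLt)
  · have hk' : k < n := lt_of_le_of_ne hk h
    rw [edges_cons, edges_cons]
    simp only [List.mem_cons, walkT_edges n T (k+1) hk']
    constructor
    · rintro (rfl | rfl | ⟨i, hi, hrest⟩)
      · exact ⟨_, le_refl _, Or.inr ⟨h2, Or.inl rfl⟩⟩
      · exact ⟨_, le_refl _, Or.inr ⟨h2, Or.inr rfl⟩⟩
      · exact ⟨i, by omega, hrest⟩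
    · rintro ⟨i, hi, ⟨hiT, rfl⟩ | ⟨hiT, rfl | rfl⟩⟩
      · refine Or.inr (Or.inr ⟨i, ?_, Or.inl ⟨hiT, rfl⟩⟩)
        rcases eq_or_lt_of_le hi with he | hl
        · exact absurd (show i = ⟨k, hk'⟩ from Fin.ext he.symm) (by rintro rfl; exact hiT h2)
        · omega
      · rcases eq_or_lt_of_le hi with he | hl
        · obtain rfl : i = ⟨k, hk'⟩ := Fin.ext he.symm
          exact Or.inl rfl
        · exact Or.inr (Or.inr ⟨i, by omega, Or.inr ⟨hiT, Or.inl rfl⟩⟩)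
      · rcases eq_or_lt_of_le hi with he | hl
        · obtain rfl : i = ⟨k, hk'⟩ := Fin.ext he.symm
          exact Or.inr (Or.inl rfl)
        · exact Or.inr (Or.inr ⟨i, by omega, Or.inr ⟨hiT, Or.inr rfl⟩⟩)
  · have hk' : k < n := lt_of_le_of_ne hk h
    rw [edges_cons]
    simp only [List.mem_cons, walkT_edges n T (k+1) hk']
    constructor
    · rintro (rfl | ⟨i, hi, hrest⟩)
      · exact ⟨_, le_refl _, Or.inl ⟨h2, rfl⟩⟩
      · exact ⟨i, by omega, hrest⟩
    · rintro ⟨i, hi, ⟨hiT, rfl⟩ | ⟨hiT, hor⟩⟩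
      · rcases eq_or_lt_of_le hi with he | hl
        · obtain rfl : i = ⟨k, hk'⟩ := Fin.ext he.symm
          exact Or.inl rfl
        · exact Or.inr ⟨i, by omega, Or.inl ⟨hiT, rfl⟩⟩
      · refine Or.inr ⟨i, ?_, Or.inr ⟨hiT, hor⟩⟩
        rcases eq_or_lt_of_le hi with he | hl
        · exact absurd (show i = ⟨k, hk'⟩ from Fin.ext he.symm) (by rintro rfl; exact h2 hiT)
        · omega
termination_by n - k

lemma walkT_len (n : ℕ) (T : Finset (Fin n)) (w : Sym2 (CV n) → ℝ) (k : ℕ) (hk : k ≤ n) :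
    walkLen w (walkT n T k hk) =
      ∑ i ∈ Finset.univ.filter (fun i : Fin n => k ≤ i.val),
        (if i ∈ T then w (d1E n i) + w (d2E n i) else w (botE n i)) := by
  rw [walkT]
  split_ifs with h h2
  · subst h
    rw [filter_ge_last]
    simp [walkLen]
  · have hk' : k < n := lt_of_le_of_ne hk h
    rw [walkLen_cons, walkLen_cons, walkT_len n T w (k+1) hk', filter_ge_step hk',
      Finset.sum_insert (by simp), if_pos h2]
    show w (d1E n ⟨k, hk'⟩) + (w (d2E n ⟨k, hk'⟩) + _) = _
    ring
  · have hk' : k < n := lt_of_le_of_ne hk h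
    rw [walkLen_cons, walkT_len n T w (k+1) hk', filter_ge_step hk',
      Finset.sum_insert (by simp), if_neg h2]
    show w (botE n ⟨k, hk'⟩) + _ = _
    ring
termination_by n - k

lemma walkT_isPath (n : ℕ) (T : Finset (Fin n)) (k : ℕ) (hk : k ≤ n) :
    (walkT n T k hk).IsPath := by
  rw [walkT]
  split_ifs with h h2
  · rw [isPath_copy]; exact IsPath.nil
  · have hk' : k < n := lt_of_le_of_ne hk h
    rw [cons_isPath_iff, cons_isPath_iff]
    refine ⟨⟨walkT_isPath n T (k+1) hk', ?_⟩, ?_⟩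
    · rw [walkT_support]
      rintro (⟨j, hj, hx⟩ | ⟨i, hi, hn, hx⟩)
      · exact absurd hx (by simp)
      · obtain rfl : i = ⟨k, hk'⟩ := by injection hx with h'; exact h'.symm
        simp at hn
    · rw [support_cons, List.mem_cons, walkT_support]
      rintro (hx | ⟨j, hj, hx⟩ | ⟨i, hi, hn, hx⟩)
      · exact absurd hx (by simp)
      · obtain rfl : j = ⟨k, Nat.lt_succ_of_le hk⟩ := by injection hx with h'; exact h'.symm
        simp at hj
      · exact absurd hx (by simp)
  · have hk' : k < n := lt_of_le_of_ne hk h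
    rw [cons_isPath_iff]
    refine ⟨walkT_isPath n T (k+1) hk', ?_⟩
    rw [walkT_support]
    rintro (⟨j, hj, hx⟩ | ⟨i, hi, hn, hx⟩)
    · obtain rfl : j = ⟨k, Nat.lt_succ_of_le hk⟩ := by injection hx with h'; exact h'.symm
      simp at hj
    · exact absurd hx (by simp)
termination_by n - k

end WalkT

section Decomp
open SimpleGraph.Walk
variable {n : ℕ}

lemma no_detour_back {a : Fin (n+1)} (q : (chainGraph n).Walk (Sum.inl a) (dst n))
    (hq : q.IsPath) (i : Fin n) (ha : a = i.succ)
    (hni : Sum.inl i.castSucc ∉ q.support) : Sum.inr i ∉ q.support := by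
  subst ha
  intro hmem
  have hne : (Sum.inr i : CV n) ≠ dst n := by simp [dst]
  obtain ⟨y, hadj, d', hd'⟩ := exists_eq_cons_of_ne hne (q.dropUntil (Sum.inr i) hmem)
  have hnd := hq.support_nodup
  conv at hnd => rw [← Walk.take_spec q hmem]
  rw [support_append] at hnd
  have hdisj := List.disjoint_of_nodup_append hnd
  have hystart : y ∈ (q.dropUntil (Sum.inr i) hmem).support.tail := by
    rw [hd', support_cons]
    exact d'.start_mem_support
  rcases adj_inr hadj with rfl | rfl
  · exact hni (Walk.support_dropUntil_subset q hmem (by rw [hd', support_cons]; exact List.mem_cons_of_mem _ d'.start_mem_support))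
  · exact hdisj ((q.takeUntil (Sum.inr i) hmem).start_mem_support) hystart

lemma decomp_last (w' : Sym2 (CV n) → ℝ) (k : Fin (n+1))
    (q : (chainGraph n).Walk (Sum.inl k) (dst n)) (hq : q.IsPath) (hkn : k.val = n) :
    ∃ T : Finset (Fin n),
      (∀ i : Fin n, Sum.inr i ∈ q.support ↔ i ∈ T) ∧
      (∀ i ∈ T, d1E n i ∈ q.edges) ∧
      walkLen w' q = ∑ i ∈ Finset.univ.filter (fun i : Fin n => k.val ≤ i.val),
        (if i ∈ T then w' (d1E n i) + w' (d2E n i) else w' (botE n i)) := by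
  have hk : Sum.inl k = dst n := by rw [dst]; congr 1; exact Fin.ext hkn
  have hnil : q.copy hk rfl = Walk.nil := isPath_iff_eq_nil.mp ((isPath_copy _ _ _).mpr hq)
  have hsupp : q.support = [dst n] := by
    have := support_copy q hk rfl
    rw [hnil] at this
    simpa using this.symm
  have hlen : walkLen w' q = 0 := by
    have := walkLen_copy w' q hk rfl
    rw [hnil] at this
    simpa [walkLen] using this.symm
  refine ⟨∅, ?_, by simp, ?_⟩
  · intro i
    rw [hsupp]; simp [dst]
  · rw [hlen]
    simp only [hkn, filter_ge_last, Finset.sum_empty]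

lemma decomp_aux (w' : Sym2 (CV n) → ℝ) :
    ∀ (N : ℕ) (k : Fin (n+1)) (q : (chainGraph n).Walk (Sum.inl k) (dst n)),
      q.length ≤ N → q.IsPath →
      (∀ j : Fin (n+1), j.val < k.val → Sum.inl j ∉ q.support) →
      (∀ i : Fin n, i.val < k.val → Sum.inr i ∉ q.support) →
      ∃ T : Finset (Fin n),
        (∀ i : Fin n, Sum.inr i ∈ q.support ↔ i ∈ T) ∧
        (∀ i ∈ T, d1E n i ∈ q.edges) ∧
        walkLen w' q = ∑ i ∈ Finset.univ.filter (fun i : Fin n => k.val ≤ i.val),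
          (if i ∈ T then w' (d1E n i) + w' (d2E n i) else w' (botE n i)) := by
  intro N
  induction N with
  | zero =>
    intro k q hN hq h1 h2
    by_cases hkn : k.val = n
    · exact decomp_last w' k q hq hkn
    · exfalso
      have heq : Sum.inl k = dst n := Walk.eq_of_length_eq_zero (Nat.le_zero.mp hN)
      rw [dst] at heq
      injection heq with heq'
      exact hkn (by rw [heq']; simp)
  | succ N IH =>
    intro k q hN hq h1 h2
    by_cases hkn : k.val = n
    · exact decomp_last w' k q hq hkn
    ·
        have hklt : k.val < n := lt_of_le_of_ne (by omega) hkn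
        have hne : Sum.inl k ≠ dst n := by
          simp only [dst, ne_eq, Sum.inl.injEq]
          intro hcon
          exact hkn (by rw [hcon]; simp)
        obtain ⟨x, hadj, q', rfl⟩ := exists_eq_cons_of_ne hne q
        obtain ⟨i, hcase⟩ := adj_inl hadj
        rcases hcase with ⟨hki, rfl⟩ | ⟨hki, rfl⟩ | ⟨hki, rfl⟩ | ⟨hki, rfl⟩
        · -- forward bottom step
          subst hki
          have hq' : q'.IsPath := hq.of_cons
          have hknot : Sum.inl i.castSucc ∉ q'.support := ((cons_isPath_iff _ _).mp hq).2
          have hri : Sum.inr i ∉ q'.support := no_detour_back q' hq' i rfl hknot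
          have h1' : ∀ j : Fin (n+1), j.val < i.succ.val → Sum.inl j ∉ q'.support := by
            intro j hj hmem
            by_cases hji : j.val = i.val
            · exact hknot (by rwa [show j = i.castSucc from Fin.ext (by simpa using hji)] at hmem)
            · exact h1 j (by simp at hj ⊢; omega) (by rw [support_cons]; exact List.mem_cons_of_mem _ hmem)
          have h2' : ∀ m : Fin n, m.val < i.succ.val → Sum.inr m ∉ q'.support := by
            intro m hm hmem
            by_cases hmi : m.val = i.val
            · exact hri (by rwa [show m = i from Fin.ext hmi] at hmem)
            · exact h2 m (by simp at hm ⊢; omega) (by rw [support_cons]; exact List.mem_cons_of_mem _ hmem)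
          obtain ⟨T, hsupp, hd1, hlen⟩ := IH i.succ q' (by simp [Walk.length_cons] at hN ⊢; omega) hq' h1' h2'
          have hiT : i ∉ T := fun hiT => hri ((hsupp i).mpr hiT)
          refine ⟨T, ?_, ?_, ?_⟩
          · intro m
            rw [support_cons, List.mem_cons, ← hsupp m]
            simp
          · intro m hm
            rw [edges_cons]
            exact List.mem_cons_of_mem _ (hd1 m hm)
          · rw [walkLen_cons, hlen]
            simp only [Fin.coe_castSucc, Fin.val_succ]
            rw [filter_ge_step i.isLt, Finset.sum_insert (by simp)]
            have : (⟨i.val, i.isLt⟩ : Fin n) = i := rfl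
            rw [this, if_neg hiT]
            congr 1
        · -- backward bottom step: impossible
          exfalso
          refine h1 i.castSucc (by simp [hki]) ?_
          rw [support_cons]
          exact List.mem_cons_of_mem _ q'.start_mem_support
        · -- detour step
          subst hki
          have hne2 : (Sum.inr i : CV n) ≠ dst n := by simp [dst]
          obtain ⟨y, hadj2, rest, rfl⟩ := exists_eq_cons_of_ne hne2 q'
          have hcnot : Sum.inl i.castSucc ∉ (Walk.cons hadj2 rest).support :=
            ((cons_isPath_iff _ _).mp hq).2
          rcases adj_inr hadj2 with rfl | rfl
          · exact absurd (by rw [support_cons]; exact List.mem_cons_of_mem _ rest.start_mem_support) hcnot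
          · have hrest : rest.IsPath := hq.of_cons.of_cons
            have hinot : Sum.inr i ∉ rest.support := ((cons_isPath_iff _ _).mp hq.of_cons).2
            have hcnot' : Sum.inl i.castSucc ∉ rest.support := fun hmem =>
              hcnot (by rw [support_cons]; exact List.mem_cons_of_mem _ hmem)
            have h1'' : ∀ j : Fin (n+1), j.val < i.succ.val → Sum.inl j ∉ rest.support := by
              intro j hj hmem
              by_cases hji : j.val = i.val
              · exact hcnot' (by rwa [show j = i.castSucc from Fin.ext (by simpa using hji)] at hmem)
              · refine h1 j (by simp at hj ⊢; omega) ?_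
                rw [support_cons, support_cons]
                exact List.mem_cons_of_mem _ (List.mem_cons_of_mem _ hmem)
            have h2'' : ∀ m : Fin n, m.val < i.succ.val → Sum.inr m ∉ rest.support := by
              intro m hm hmem
              by_cases hmi : m.val = i.val
              · exact hinot (by rwa [show m = i from Fin.ext hmi] at hmem)
              · refine h2 m (by simp at hm ⊢; omega) ?_
                rw [support_cons, support_cons]
                exact List.mem_cons_of_mem _ (List.mem_cons_of_mem _ hmem)
            obtain ⟨T, hsupp, hd1, hlen⟩ := IH i.succ rest (by simp [Walk.length_cons] at hN ⊢; omega) hrest h1'' h2''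
            have hiT : i ∉ T := fun hiT => hinot ((hsupp i).mpr hiT)
            refine ⟨insert i T, ?_, ?_, ?_⟩
            · intro m
              rw [support_cons, support_cons, List.mem_cons, List.mem_cons]
              simp only [Finset.mem_insert]
              constructor
              · rintro (hx | hx | hx)
                · exact absurd hx (by simp)
                · exact Or.inl (Sum.inr.inj hx)
                · exact Or.inr ((hsupp m).mp hx)
              · rintro (rfl | hx)
                · exact Or.inr (Or.inl rfl)
                · exact Or.inr (Or.inr ((hsupp m).mpr hx))
            · intro m hm
              rw [edges_cons, edges_cons]
              rcases Finset.mem_insert.mp hm with rfl | hm'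
              · exact List.mem_cons_self
              · exact List.mem_cons_of_mem _ (List.mem_cons_of_mem _ (hd1 m hm'))
            · rw [walkLen_cons, walkLen_cons, hlen]
              simp only [Fin.coe_castSucc, Fin.val_succ]
              rw [filter_ge_step i.isLt, Finset.sum_insert (by simp)]
              have hie : (⟨i.val, i.isLt⟩ : Fin n) = i := rfl
              rw [hie, if_pos (Finset.mem_insert_self i T)]
              have htail : ∑ m ∈ Finset.univ.filter (fun m : Fin n => i.val + 1 ≤ m.val),
                  (if m ∈ insert i T then w' (d1E n m) + w' (d2E n m) else w' (botE n m))
                  = ∑ m ∈ Finset.univ.filter (fun m : Fin n => i.val + 1 ≤ m.val),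
                  (if m ∈ T then w' (d1E n m) + w' (d2E n m) else w' (botE n m)) := by
                refine Finset.sum_congr rfl ?_
                intro m hm
                rw [Finset.mem_filter] at hm
                have : m ≠ i := by
                  intro hmi
                  rw [hmi] at hm
                  omega
                simp [Finset.mem_insert, this]
              rw [htail]
              show w' (d1E n i) + (w' (d2E n i) + _) = _
              ring
        · -- backward d2 step: impossible
          exfalso
          refine h2 i (by rw [hki]; simp) ?_
          rw [support_cons]
          exact List.mem_cons_of_mem _ q'.start_mem_support


lemma decomp (w' : Sym2 (CV n) → ℝ) (k : Fin (n+1))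
    (q : (chainGraph n).Walk (Sum.inl k) (dst n)) (hq : q.IsPath)
    (h1 : ∀ j : Fin (n+1), j.val < k.val → Sum.inl j ∉ q.support)
    (h2 : ∀ i : Fin n, i.val < k.val → Sum.inr i ∉ q.support) :
    ∃ T : Finset (Fin n),
      (∀ i : Fin n, Sum.inr i ∈ q.support ↔ i ∈ T) ∧
      (∀ i ∈ T, d1E n i ∈ q.edges) ∧
      walkLen w' q = ∑ i ∈ Finset.univ.filter (fun i : Fin n => k.val ≤ i.val),
        (if i ∈ T then w' (d1E n i) + w' (d2E n i) else w' (botE n i)) :=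
  decomp_aux w' q.length k q (le_refl _) hq h1 h2

end Decomp

section Main
open SimpleGraph.Walk
variable {n : ℕ}

lemma d1E_mem_edgeSet (i : Fin n) : d1E n i ∈ (chainGraph n).edgeSet := by
  rw [chainGraph, edgeSet_fromEdgeSet]
  exact ⟨⟨i, Or.inr (Or.inl rfl)⟩, by simp [d1E]⟩

lemma walkLen_transfer {G H : SimpleGraph (CV n)} {u v : CV n} (p : G.Walk u v)
    (hp : ∀ e ∈ p.edges, e ∈ H.edgeSet) (w : Sym2 (CV n) → ℝ) :
    walkLen w (p.transfer H hp) = walkLen w p := by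
  simp [walkLen, Walk.edges_transfer]

end Main

/-- NP-hardness reduction core (Zero-Sum Cut Defense): in the chain-of-triangles instance
built from a Knapsack instance (bottom edges of weight 1 and cost 1; detour edges of
weights `1` and `η_i` and removal cost `ν_i` each; target path the bottom chain; attacker
budget `U − 1`; `f₊ = 1`), there is a knapsack solution of value ≥ `U` and weight ≤ `H`
iff the defender can publish weights `w' ≥ w` forcing every attack to cost at least `U`
(attack probability zero) while keeping the published shortest `s`–`t` distance — hence
the defender's cost increase over the unperturbed cost `n` — at most `H`. -/
theorem stmt7 (n : ℕ) (ν η : Fin n → ℕ) (hν : ∀ i, 0 < ν i) (hη : ∀ i, 0 < η i)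
    (U H : ℕ) (w c : Sym2 (CV n) → ℝ)
    (hwbot : ∀ i, w (botE n i) = 1) (hwd1 : ∀ i, w (d1E n i) = 1)
    (hwd2 : ∀ i, w (d2E n i) = (η i : ℝ))
    (hc1 : ∀ i, c (d1E n i) = (ν i : ℝ)) (hc2 : ∀ i, c (d2E n i) = (ν i : ℝ)) :
    (∃ S : Finset (Fin n),
        (U : ℝ) ≤ ∑ i ∈ S, (ν i : ℝ) ∧ ∑ i ∈ S, (η i : ℝ) ≤ (H : ℝ)) ↔
      ∃ w' : Sym2 (CV n) → ℝ, (∀ e, w e ≤ w' e) ∧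
        (∀ E', IsChainAttack n w' E' → (U : ℝ) ≤ ∑ e ∈ E', c e) ∧
        (∃ q : (chainGraph n).Walk (src n) (dst n), q.IsPath ∧
          walkLen w' q ≤ (n : ℝ) + (H : ℝ)) := by
  constructor
  · -- forward direction
    rintro ⟨S, hU, hH⟩
    set w' : Sym2 (CV n) → ℝ :=
      fun e => w e + ∑ i ∈ S, (if e = botE n i then (η i : ℝ) else 0) with hw'
    have hw'bot : ∀ j, w' (botE n j) = 1 + (if j ∈ S then (η j : ℝ) else 0) := by
      intro j
      rw [hw']
      simp only [hwbot j, botE_eq_botE]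
      congr 1
      rw [Finset.sum_ite_eq S j (fun i => (η i : ℝ))]
    have hw'd1 : ∀ j, w' (d1E n j) = 1 := by
      intro j
      rw [hw']
      simp only [hwd1 j]
      rw [Finset.sum_eq_zero, add_zero]
      intro i _
      exact if_neg (fun h => botE_ne_d1E h.symm)
    have hw'd2 : ∀ j, w' (d2E n j) = (η j : ℝ) := by
      intro j
      rw [hw']
      simp only [hwd2 j]
      rw [Finset.sum_eq_zero, add_zero]
      intro i _
      exact if_neg (fun h => botE_ne_d2E h.symm)
    have hBsum : ∑ i : Fin n, w' (botE n i) = (n : ℝ) + ∑ i ∈ S, (η i : ℝ) := by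
      simp only [hw'bot]
      rw [Finset.sum_add_distrib]
      congr 1
      · simp
      · rw [← Finset.sum_filter]
        congr 1
        ext i
        simp
    refine ⟨w', ?_, ?_, ?_⟩
    · intro e
      rw [hw']
      refine le_add_of_nonneg_right (Finset.sum_nonneg fun i _ => ?_)
      split <;> positivity
    · -- every attack costs at least U
      intro E' hE'
      obtain ⟨hEsub, hEbot, hEstrict⟩ := hE'
      have hhit : ∀ i ∈ S, d1E n i ∈ E' ∨ d2E n i ∈ E' := by
        intro i hiS
        by_contra hcon
        push_neg at hcon
        obtain ⟨hnd1, hnd2⟩ := hcon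
        -- detour walk at triangle i
        have hsrc : (Sum.inl (⟨0, Nat.zero_lt_succ n⟩ : Fin (n+1)) : CV n) = src n := by
          rw [src]; congr 1
        have hedges : ∀ e ∈ (walkT n {i} 0 (Nat.zero_le n)).edges, e ∉ (↑E' : Set (Sym2 (CV n))) := by
          intro e he
          rw [walkT_edges] at he
          obtain ⟨m, -, ⟨-, rfl⟩ | ⟨hm, rfl | rfl⟩⟩ := he
          · exact fun hmem => hEbot m hmem
          · rw [Finset.mem_singleton] at hm; subst hm
            exact fun hmem => hnd1 hmem
          · rw [Finset.mem_singleton] at hm; subst hm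
            exact fun hmem => hnd2 hmem
        set qi := ((walkT n {i} 0 (Nat.zero_le n)).copy hsrc rfl) with hqi
        have hedges' : ∀ e ∈ qi.edges, e ∉ (↑E' : Set (Sym2 (CV n))) := by
          intro e he
          rw [hqi, Walk.edges_copy] at he
          exact hedges e he
        have hqipath : qi.IsPath := by
          rw [hqi, Walk.isPath_copy]
          exact walkT_isPath n {i} 0 (Nat.zero_le n)
        have hvis : ∃ m, Sum.inr m ∈ (qi.toDeleteEdges ↑E' hedges').support := by
          refine ⟨i, ?_⟩
          rw [Walk.support_transfer, hqi, Walk.support_copy, walkT_support]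
          exact Or.inr ⟨i, Finset.mem_singleton_self i, Nat.zero_le _, rfl⟩
        have hstrict := hEstrict (qi.toDeleteEdges ↑E' hedges')
          (Walk.IsPath.toDeleteEdges (chainGraph n) (↑E' : Set (Sym2 (CV n))) hqipath hedges') hvis
        have hlen : walkLen w' (qi.toDeleteEdges ↑E' hedges') = walkLen w' qi :=
          walkLen_transfer _ _ _
        have hqilen : walkLen w' qi = ∑ m : Fin n, w' (botE n m) := by
          rw [hqi, walkLen_copy, walkT_len]
          rw [show (Finset.univ.filter fun m : Fin n => 0 ≤ m.val) = Finset.univ by simp]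
          refine Finset.sum_congr rfl fun m _ => ?_
          by_cases hmi : m = i
          · subst hmi
            rw [if_pos (Finset.mem_singleton_self m), hw'd1, hw'd2, hw'bot,
              if_pos hiS]
          · rw [if_neg (by simpa using hmi)]
        rw [hlen, hqilen] at hstrict
        exact lt_irrefl _ hstrict
      -- now bound the cost
      set g : Fin n → Sym2 (CV n) := fun i => if d1E n i ∈ E' then d1E n i else d2E n i with hg
      have hgmem : ∀ i ∈ S, g i ∈ E' := by
        intro i hiS
        simp only [hg]
        rcases hhit i hiS with h | h
        · rwa [if_pos h]
        · split
          · assumption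
          · exact h
      have hgc : ∀ i, c (g i) = (ν i : ℝ) := by
        intro i
        simp only [hg]
        split
        · exact hc1 i
        · exact hc2 i
      have hginj : Set.InjOn g S := by
        intro a _ b _ hab
        simp only [hg] at hab
        split at hab <;> split at hab
        · exact d1E_eq_d1E.mp hab
        · exact absurd hab d1E_ne_d2E
        · exact absurd hab.symm d1E_ne_d2E
        · exact d2E_eq_d2E.mp hab
      have himg : S.image g ⊆ E' := by
        intro e he
        obtain ⟨i, hi, rfl⟩ := Finset.mem_image.mp he
        exact hgmem i hi
      have hcnonneg : ∀ e ∈ E', 0 ≤ c e := by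
        intro e he
        obtain ⟨m, rfl | rfl | rfl⟩ := mem_edgeSet_chain (hEsub he)
        · exact absurd he (hEbot m)
        · rw [hc1]; positivity
        · rw [hc2]; positivity
      calc (U : ℝ) ≤ ∑ i ∈ S, (ν i : ℝ) := hU
        _ = ∑ e ∈ S.image g, c e := by
            rw [Finset.sum_image (fun a ha b hb hab => hginj ha hb hab)]
            exact (Finset.sum_congr rfl fun i _ => (hgc i).symm)
        _ ≤ ∑ e ∈ E', c e := Finset.sum_le_sum_of_subset_of_nonneg himg
            (fun e he _ => hcnonneg e he)
    · -- the published bottom path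
      have hsrc : (Sum.inl (⟨0, Nat.zero_lt_succ n⟩ : Fin (n+1)) : CV n) = src n := by
        rw [src]; congr 1
      refine ⟨(walkT n ∅ 0 (Nat.zero_le n)).copy hsrc rfl, ?_, ?_⟩
      · rw [Walk.isPath_copy]
        exact walkT_isPath n ∅ 0 (Nat.zero_le n)
      · rw [walkLen_copy, walkT_len]
        rw [show (Finset.univ.filter fun m : Fin n => 0 ≤ m.val) = Finset.univ by simp]
        simp only [Finset.notMem_empty, if_false]
        rw [hBsum]
        have := hH
        linarith
  · -- backward direction
    rintro ⟨w', hle, hatt, q0, hq0path, hq0len⟩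
    set S : Finset (Fin n) :=
      Finset.univ.filter (fun i => w' (d1E n i) + w' (d2E n i) ≤ w' (botE n i)) with hS
    have wb : ∀ i, (1 : ℝ) ≤ w' (botE n i) := fun i => (hwbot i) ▸ hle (botE n i)
    have w1 : ∀ i, (1 : ℝ) ≤ w' (d1E n i) := fun i => (hwd1 i) ▸ hle (d1E n i)
    have wh : ∀ i, (η i : ℝ) ≤ w' (d2E n i) := fun i => (hwd2 i) ▸ hle (d2E n i)
    refine ⟨S, ?_, ?_⟩
    · -- value bound via the attack S.image d1E
      set E' : Finset (Sym2 (CV n)) := S.image (d1E n) with hE'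
      have hattack : IsChainAttack n w' E' := by
        refine ⟨?_, ?_, ?_⟩
        · intro e he
          rw [Finset.mem_coe, hE', Finset.mem_image] at he
          obtain ⟨i, -, rfl⟩ := he
          exact d1E_mem_edgeSet i
        · intro i hmem
          rw [hE', Finset.mem_image] at hmem
          obtain ⟨j, -, hj⟩ := hmem
          exact botE_ne_d1E hj.symm
        · intro qd hqdpath hvisit
          have hedgesub : ∀ e ∈ qd.edges, e ∈ (chainGraph n).edgeSet := by
            intro e he
            have := qd.edges_subset_edgeSet he
            rw [edgeSet_deleteEdges] at this
            exact this.1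
          have hedgenot : ∀ e ∈ qd.edges, e ∉ (↑E' : Set (Sym2 (CV n))) := by
            intro e he
            have := qd.edges_subset_edgeSet he
            rw [edgeSet_deleteEdges] at this
            exact this.2
          set qc := qd.transfer (chainGraph n) hedgesub with hqc
          have hqcpath : qc.IsPath := hqdpath.transfer hedgesub
          obtain ⟨T, hsuppT, hd1T, hlenT⟩ := decomp w' 0 qc hqcpath
            (fun j hj => absurd hj (by simp)) (fun i hi => absurd hi (by simp))
          have hTnotS : ∀ i ∈ T, i ∉ S := by
            intro i hiT hiS
            refine hedgenot (d1E n i) ?_ ?_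
            · have : d1E n i ∈ qc.edges := hd1T i hiT
              rwa [hqc, Walk.edges_transfer] at this
            · rw [hE']
              exact Finset.mem_image_of_mem _ hiS
          have hTlt : ∀ i ∈ T, w' (botE n i) < w' (d1E n i) + w' (d2E n i) := by
            intro i hiT
            have := hTnotS i hiT
            rw [hS, Finset.mem_filter] at this
            push_neg at this
            exact this (Finset.mem_univ i)
          have hlen' : walkLen w' qd = walkLen w' qc := (walkLen_transfer qd hedgesub w').symm
          rw [hlen', show walkLen w' qc = _ from hlenT]
          rw [show (Finset.univ.filter fun m : Fin n => (0 : Fin (n+1)).val ≤ m.val)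
            = Finset.univ by simp]
          obtain ⟨i0, hi0⟩ := hvisit
          have hi0T : i0 ∈ T := by
            rw [← hsuppT i0]
            show Sum.inr i0 ∈ qc.support
            rw [hqc, Walk.support_transfer]
            exact hi0
          refine Finset.sum_lt_sum (fun i _ => ?_) ⟨i0, Finset.mem_univ i0, ?_⟩
          · by_cases hiT : i ∈ T
            · rw [if_pos hiT]
              exact le_of_lt (hTlt i hiT)
            · rw [if_neg hiT]
          · rw [if_pos hi0T]
            exact hTlt i0 hi0T
      have hcost := hatt E' hattack
      have hsum : ∑ e ∈ E', c e = ∑ i ∈ S, (ν i : ℝ) := by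
        rw [hE', Finset.sum_image (fun a _ b _ hab => d1E_eq_d1E.mp hab)]
        exact Finset.sum_congr rfl fun i _ => hc1 i
      rw [hsum] at hcost
      exact hcost
    · -- weight bound from the published path
      obtain ⟨T0, hsupp0, hd10, hlen0⟩ := decomp w' 0 q0 hq0path
        (fun j hj => absurd hj (by simp)) (fun i hi => absurd hi (by simp))
      rw [show (Finset.univ.filter fun m : Fin n => (0 : Fin (n+1)).val ≤ m.val)
        = Finset.univ by simp] at hlen0
      have hlower : ∀ i : Fin n,
          (1 : ℝ) + (if i ∈ S then (η i : ℝ) else 0)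
            ≤ (if i ∈ T0 then w' (d1E n i) + w' (d2E n i) else w' (botE n i)) := by
        intro i
        have hd12 : (1 : ℝ) + (η i : ℝ) ≤ w' (d1E n i) + w' (d2E n i) :=
          add_le_add (w1 i) (wh i)
        by_cases hiS : i ∈ S
        · rw [if_pos hiS]
          have hSle : w' (d1E n i) + w' (d2E n i) ≤ w' (botE n i) := by
            rw [hS, Finset.mem_filter] at hiS
            exact hiS.2
          by_cases hiT : i ∈ T0
          · rw [if_pos hiT]; exact hd12
          · rw [if_neg hiT]; linarith
        · rw [if_neg hiS, add_zero]
          by_cases hiT : i ∈ T0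
          · rw [if_pos hiT]
            have : (0 : ℝ) ≤ (η i : ℝ) := by positivity
            linarith
          · rw [if_neg hiT]; exact wb i
      have hsumlow : (n : ℝ) + ∑ i ∈ S, (η i : ℝ) ≤ walkLen w' q0 := by
        rw [show walkLen w' q0 = _ from hlen0]
        calc (n : ℝ) + ∑ i ∈ S, (η i : ℝ)
            = ∑ i : Fin n, ((1 : ℝ) + (if i ∈ S then (η i : ℝ) else 0)) := by
              rw [Finset.sum_add_distrib]
              congr 1
              · simp
              · rw [← Finset.sum_filter]
                congr 1
                ext i
                simp [hS]
          _ ≤ _ := Finset.sum_le_sum fun i _ => hlower i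
      linarith
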